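/- The continued fraction expansion of a quadratic irrational number in (0,1) is eventually periodic. -/

import Mathlib

private lemma int_linear_ne (P Q : ℤ) (r : ℝ) (hr : Irrational r) (hP : P ≠ 0) :
    (P:ℝ) * r + Q ≠ 0 := by
  intro heq
  have h1 : Irrational ((P:ℝ) * r) := hr.intCast_mul hP
  have h2 : (P:ℝ) * r = ((-Q : ℤ) : ℝ) := by push_cast; linarith
  exact h1.ne_int (-Q) h2

private lemma roots_finite (A B C : ℤ) (hA : A ≠ 0) :
    {r : ℝ | (A:ℝ) * r^2 + B * r + C = 0}.Finite := by
  have hpne : (Polynomial.C (A:ℝ) * Polynomial.X^2 + Polynomial.C (B:ℝ) * Polynomial.X +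
      Polynomial.C (C:ℝ)) ≠ 0 := by
    intro h
    have h2 : (Polynomial.C (A:ℝ) * Polynomial.X^2 + Polynomial.C (B:ℝ) * Polynomial.X +
        Polynomial.C (C:ℝ)).coeff 2 = 0 := by rw [h]; simp
    simp only [Polynomial.coeff_add, Polynomial.coeff_C_mul, Polynomial.coeff_X_pow,
      Polynomial.coeff_C, Polynomial.coeff_mul_X] at h2
    norm_num at h2
    exact hA (by exact_mod_cast h2)
  apply Set.Finite.subset (Polynomial.finite_setOf_isRoot hpne)
  intro r hr
  simp only [Set.mem_setOf_eq] at hr ⊢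
  simp [Polynomial.IsRoot]
  linarith [hr]

set_option maxHeartbeats 2000000 in
private lemma quad_aux (x : ℕ → ℝ) (a : ℕ → ℤ) (A B C : ℕ → ℤ)
    (hx : ∀ n, x n ∈ Set.Ioo (0:ℝ) 1) (hxirr : ∀ n, Irrational (x n))
    (ha : ∀ n, a n = ⌊1 / x n⌋)
    (hxs : ∀ n, x (n + 1) = 1 / x n - ⌊1 / x n⌋)
    (hroot : ∀ n, (A n : ℝ) * x n ^ 2 + B n * x n + C n = 0)
    (hA : ∀ n, A n ≠ 0)
    (hAC : ∀ n, A (n + 1) = C n)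
    (hB : ∀ n, B (n + 1) = B n + 2 * C n * a n)
    (hdisc0 : ∀ n, (B n)^2 - 4 * A n * C n = (B 0)^2 - 4 * A 0 * C 0) :
    ∃ l m : ℕ, 0 < m ∧ ∀ n ≥ l, a (n + m) = a n := by
  obtain ⟨D, hD⟩ : ∃ D : ℤ, D = (B 0)^2 - 4 * A 0 * C 0 := ⟨_, rfl⟩
  have hdisc : ∀ n, (B n)^2 - 4 * A n * C n = D := fun n => by rw [hD]; exact hdisc0 n
  have hxpos : ∀ n, 0 < x n := fun n => (hx n).1
  have hxne : ∀ n, x n ≠ 0 := fun n => (hxpos n).ne'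
  have hAne : ∀ n, (A n : ℝ) ≠ 0 := fun n => Int.cast_ne_zero.2 (hA n)
  have hCne : ∀ n, (C n : ℝ) ≠ 0 := fun n => by
    have := hAne (n + 1); rwa [hAC n] at this
  have ha1 : ∀ n, 1 ≤ a n := by
    intro n
    rw [ha n]
    have : (1:ℝ) ≤ 1 / x n := le_of_lt (one_lt_one_div (hxpos n) (hx n).2)
    exact Int.le_floor.2 (by exact_mod_cast this)
  have ha1' : ∀ n, (1:ℝ) ≤ (a n : ℝ) := fun n => by exact_mod_cast ha1 n
  have hxsa : ∀ n, x (n + 1) = 1 / x n - a n := fun n => by rw [hxs n, ha n]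
  have key : ∀ n, (2 * A n * x n + B n)^2 = (D:ℝ) := by
    intro n
    have h := hroot n
    have h2 : ((B n)^2 - 4 * A n * C n : ℝ) = (D:ℝ) := by exact_mod_cast hdisc n
    linear_combination 4 * (A n : ℝ) * h + h2
  have hDpos : (0:ℝ) < (D:ℝ) := by
    have h0 := key 0
    have hne : (2 * (A 0:ℝ) * x 0 + B 0) ≠ 0 := by
      intro heq
      exact int_linear_ne (2 * A 0) (B 0) (x 0) (hxirr 0) (by simpa using hA 0)
        (by push_cast; linarith)
    rw [← h0]; positivity
  have hDposZ : 0 < D := by exact_mod_cast hDpos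
  obtain ⟨y, hyd⟩ : ∃ y : ℕ → ℝ, ∀ n, y n = -(B n : ℝ) / A n - x n := ⟨_, fun _ => rfl⟩
  have hxy : ∀ n, (A n : ℝ) * (x n * y n) = C n := by
    intro n
    have h := hroot n
    rw [hyd n]
    field_simp [hAne n]
    linear_combination -h
  have hyne : ∀ n, y n ≠ 0 := by
    intro n h0
    apply hCne n
    rw [← hxy n, h0, mul_zero, mul_zero]
  have hyrec : ∀ n, y (n + 1) = 1 / y n - a n := by
    intro n
    have h := hroot n
    have h1 : (1:ℝ) / y n = A n * x n / C n := by
      rw [eq_div_iff (hCne n), ← hxy n]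
      field_simp [hyne n]
    rw [hyd (n+1), hAC n, hB n, hxsa n, h1]
    push_cast
    field_simp [hxne n, hCne n]
    linear_combination -h
  have hAy : ∀ n, (A n:ℝ) * (x n - y n) = 2 * A n * x n + B n := by
    intro n
    rw [hyd n]
    field_simp [hAne n]
    ring
  have hg : ∀ n, ((A n:ℝ))^2 * (x n - y n)^2 = (D:ℝ) := by
    intro n
    have h2 : ((A n:ℝ) * (x n - y n))^2 = (D:ℝ) := by rw [hAy n]; exact key n
    linear_combination h2
  have hgpos : ∀ n, 0 < (x n - y n)^2 := by
    intro n
    rcases eq_or_lt_of_le (sq_nonneg (x n - y n)) with h0 | h0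
    · exfalso
      have := hg n
      rw [← h0, mul_zero] at this
      exact absurd this.symm (ne_of_gt hDpos)
    · exact h0
  have hstep : ∀ n, y n < 0 → y (n+1) < -1 := by
    intro n hn
    rw [hyrec n]
    have h1 : 1 / y n < 0 := one_div_neg.2 hn
    linarith [ha1' n]
  have hexy : ∃ n, y n < 0 := by
    by_contra hcon
    push_neg at hcon
    have hypos : ∀ n, 0 < y n := fun n => lt_of_le_of_ne (hcon n) (Ne.symm (hyne n))
    have hylt1 : ∀ n, y n < 1 := by
      intro n
      by_contra hge
      push_neg at hge
      have h1 : 1 / y n ≤ 1 := by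
        rw [div_le_one (hypos n)]; exact hge
      have h2 := hypos (n+1)
      rw [hyrec n] at h2
      linarith [ha1' n]
    have hglt1 : ∀ n, (x n - y n)^2 < 1 := by
      intro n
      nlinarith [(hx n).1, (hx n).2, hypos n, hylt1 n]
    have hgrec : ∀ n, (x (n+1) - y (n+1))^2 * (x n * y n)^2 = (x n - y n)^2 := by
      intro n
      have h1 : (x (n+1) - y (n+1)) * (x n * y n) = y n - x n := by
        rw [hxsa n, hyrec n]
        field_simp [hxne n, hyne n]
        ring
      linear_combination ((x (n+1) - y (n+1)) * (x n * y n) + (y n - x n)) * h1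
    obtain ⟨c, hc⟩ : ∃ c : ℝ, c = 1 - (x 0 - y 0)^2 / 4 := ⟨_, rfl⟩
    have hcpos : 0 < c := by rw [hc]; nlinarith [hglt1 0]
    have hclt1 : c < 1 := by rw [hc]; nlinarith [hgpos 0]
    have hmain : ∀ n, (x 0 - y 0)^2 ≤ (x n - y n)^2 * c^n := by
      intro n
      induction n with
      | zero => simp
      | succ n ih =>
        have hcn : (0:ℝ) < c^n := pow_pos hcpos n
        have hgn : (x 0 - y 0)^2 ≤ (x n - y n)^2 := by
          have h1 : c^n ≤ 1 := pow_le_one₀ (le_of_lt hcpos) (le_of_lt hclt1)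
          nlinarith [hgpos n]
        have hxyle : x n * y n ≤ c := by
          rw [hc]
          nlinarith [(hx n).1, (hx n).2, hypos n, hylt1 n, hgn]
        have hxypos : 0 < x n * y n := mul_pos (hxpos n) (hypos n)
        have ht : (x n * y n)^2 ≤ c^2 := by nlinarith
        have h1 : (x n - y n)^2 ≤ (x (n+1) - y (n+1))^2 * c^2 := by
          have h2 := hgrec n
          nlinarith [sq_nonneg (x (n+1) - y (n+1))]
        calc (x 0 - y 0)^2 ≤ (x n - y n)^2 * c^n := ih
          _ ≤ ((x (n+1) - y (n+1))^2 * c^2) * c^n := by nlinarith [hcn]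
          _ = (x (n+1) - y (n+1))^2 * c^(n+2) := by ring
          _ ≤ (x (n+1) - y (n+1))^2 * c^(n+1) := by
              have h3 : c^(n+2) ≤ c^(n+1) :=
                pow_le_pow_of_le_one (le_of_lt hcpos) (le_of_lt hclt1) (Nat.le_succ (n+1))
              nlinarith [sq_nonneg (x (n+1) - y (n+1))]
    obtain ⟨n, hn⟩ := exists_pow_lt_of_lt_one (hgpos 0) hclt1
    have h1 := hmain n
    have h2 := hglt1 n
    have h3 : (0:ℝ) < c^n := pow_pos hcpos n
    nlinarith
  obtain ⟨n0, hn0⟩ := hexy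
  obtain ⟨N, hN⟩ : ∃ N : ℕ, N = n0 + 1 := ⟨_, rfl⟩
  have hyN : ∀ n, N ≤ n → y n < -1 := by
    have hk : ∀ k, y (n0 + 1 + k) < -1 := by
      intro k
      induction k with
      | zero => exact hstep n0 hn0
      | succ k ih =>
        have h1 : y (n0 + 1 + k) < 0 := by linarith
        exact hstep _ h1
    intro n hn
    have h2 : n = n0 + 1 + (n - N) := by omega
    rw [h2]
    exact hk _
  have hAb : ∀ n, N ≤ n → (A n)^2 ≤ D := by
    intro n hn
    have hgap : 1 < (x n - y n)^2 := by nlinarith [hxpos n, hyN n hn]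
    have h1 : ((A n:ℝ))^2 < (D:ℝ) := by
      nlinarith [hg n, sq_pos_of_ne_zero (hAne n)]
    have h2 : ((A n)^2 : ℤ) < D := by exact_mod_cast h1
    linarith
  have hCb : ∀ n, N ≤ n → (C n)^2 ≤ D := by
    intro n hn
    rw [← hAC n]
    exact hAb (n+1) (by omega)
  have hBb : ∀ n, N ≤ n → (B n)^2 ≤ 5 * D := by
    intro n hn
    have h1 := hdisc n
    nlinarith [hAb n hn, hCb n hn, sq_nonneg (A n - C n), sq_nonneg (A n + C n)]
  have hsfin : {p : ℤ × ℤ × ℤ | p.1 ≠ 0 ∧ p.1^2 ≤ D ∧ p.2.1^2 ≤ 5*D ∧ p.2.2^2 ≤ D}.Finite := by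
    apply Set.Finite.subset
      (((Set.finite_Icc (-D) D).prod ((Set.finite_Icc (-(5*D)) (5*D)).prod
        (Set.finite_Icc (-D) D))))
    have hb : ∀ z bd : ℤ, 0 < bd → z^2 ≤ bd → -bd ≤ z ∧ z ≤ bd := by
      intro z bd hbd hz
      constructor <;>
        nlinarith [sq_nonneg (z + bd), sq_nonneg (z - bd),
          mul_nonneg (by linarith : (0:ℤ) ≤ bd) (by linarith : (0:ℤ) ≤ bd - 1)]
    rintro ⟨p1, p2, p3⟩ ⟨-, h1, h2, h3⟩
    exact ⟨Set.mem_Icc.2 (hb p1 D hDposZ h1),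
      Set.mem_Icc.2 (hb p2 (5*D) (by linarith) h2),
      Set.mem_Icc.2 (hb p3 D hDposZ h3)⟩
  have htfin : {r : ℝ | ∃ p : ℤ × ℤ × ℤ, p.1 ≠ 0 ∧ p.1^2 ≤ D ∧ p.2.1^2 ≤ 5*D ∧
      p.2.2^2 ≤ D ∧ (p.1:ℝ) * r^2 + p.2.1 * r + p.2.2 = 0}.Finite := by
    apply Set.Finite.subset (Set.Finite.biUnion hsfin
      (fun p hp => roots_finite p.1 p.2.1 p.2.2 hp.1))
    rintro r ⟨p, hp1, hp2, hp3, hp4, hp5⟩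
    exact Set.mem_biUnion ⟨hp1, hp2, hp3, hp4⟩ hp5
  have hmaps : Set.MapsTo x (Set.Ici N) {r : ℝ | ∃ p : ℤ × ℤ × ℤ, p.1 ≠ 0 ∧ p.1^2 ≤ D ∧
      p.2.1^2 ≤ 5*D ∧ p.2.2^2 ≤ D ∧ (p.1:ℝ) * r^2 + p.2.1 * r + p.2.2 = 0} := by
    intro n hn
    exact ⟨(A n, B n, C n), hA n, hAb n hn, hBb n hn, hCb n hn, hroot n⟩
  obtain ⟨n1, hn1, n2, hn2, hne, heq⟩ :=
    (Set.Ici_infinite N).exists_ne_map_eq_of_mapsTo hmaps htfin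
  have hper : ∀ m1 m2 : ℕ, m1 < m2 → x m1 = x m2 →
      ∃ l m : ℕ, 0 < m ∧ ∀ n ≥ l, a (n + m) = a n := by
    intro m1 m2 hlt hxeq
    refine ⟨m1, m2 - m1, Nat.sub_pos_of_lt hlt, ?_⟩
    have hstep2 : ∀ j, x (m1 + j) = x (m2 + j) := by
      intro j
      induction j with
      | zero => simpa using hxeq
      | succ j ih =>
        show x ((m1 + j) + 1) = x ((m2 + j) + 1)
        rw [hxs, hxs, ih]
    intro n hn
    have h2 : n + (m2 - m1) = m2 + (n - m1) := by omega
    have hj : n = m1 + (n - m1) := by omega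
    calc a (n + (m2 - m1)) = ⌊1 / x (m2 + (n - m1))⌋ := by rw [ha, h2]
      _ = ⌊1 / x (m1 + (n - m1))⌋ := by rw [hstep2]
      _ = a n := by rw [← hj, ← ha]
  rcases hne.lt_or_gt with h | h
  · exact hper n1 n2 h heq
  · exact hper n2 n1 h heq.symm

private def qT (a : ℕ → ℤ) (p0 : ℤ × ℤ × ℤ) : ℕ → ℤ × ℤ × ℤ
  | 0 => p0
  | n+1 => ((qT a p0 n).2.2,
      (qT a p0 n).2.1 + 2 * (qT a p0 n).2.2 * (a n),
      (qT a p0 n).1 + (qT a p0 n).2.1 * (a n) + (qT a p0 n).2.2 * (a n)^2)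

/-- The continued fraction expansion (via the Gauss map) of a quadratic
irrational in `(0,1)` is eventually periodic. -/
theorem quadratic_cf_eventually_periodic
    (Ω : ℝ) (hΩ : Ω ∈ Set.Ioo (0 : ℝ) 1) (hirr : Irrational Ω)
    (hquad : ∃ a b c : ℤ, a ≠ 0 ∧ (a : ℝ) * Ω ^ 2 + b * Ω + c = 0)
    (x : ℕ → ℝ) (a : ℕ → ℤ)
    (hx0 : x 0 = Ω)
    (ha : ∀ n, a n = ⌊1 / x n⌋)
    (hxs : ∀ n, x (n + 1) = 1 / x n - ⌊1 / x n⌋) :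
    ∃ l m : ℕ, 0 < m ∧ ∀ n ≥ l, a (n + m) = a n := by
  obtain ⟨a0, b0, c0, ha0, heq⟩ := hquad
  -- membership and irrationality of all x n
  have hxm : ∀ n, x n ∈ Set.Ioo (0:ℝ) 1 ∧ Irrational (x n) := by
    intro n
    induction n with
    | zero => rw [hx0]; exact ⟨hΩ, hirr⟩
    | succ n ih =>
      have hirr1 : Irrational (1 / x n) := by rw [one_div]; exact ih.2.inv
      have hirr2 : Irrational (x (n+1)) := by rw [hxs n]; exact hirr1.sub_intCast _
      refine ⟨⟨?_, ?_⟩, hirr2⟩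
      · rw [hxs n]
        have h1 : 0 < Int.fract (1 / x n) := Int.fract_pos.2 (hirr1.ne_int _)
        rwa [Int.self_sub_floor]
      · rw [hxs n]
        have h1 := Int.fract_lt_one (1 / x n)
        rw [Int.self_sub_floor]
        exact h1
  have hx' : ∀ n, x n ∈ Set.Ioo (0:ℝ) 1 := fun n => (hxm n).1
  have hxirr : ∀ n, Irrational (x n) := fun n => (hxm n).2
  have hxne : ∀ n, x n ≠ 0 := fun n => (hx' n).1.ne'
  set A : ℕ → ℤ := fun n => (qT a (a0, b0, c0) n).1 with hAdef
  set B : ℕ → ℤ := fun n => (qT a (a0, b0, c0) n).2.1 with hBdef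
  set C : ℕ → ℤ := fun n => (qT a (a0, b0, c0) n).2.2 with hCdef
  have hAC : ∀ n, A (n+1) = C n := fun n => rfl
  have hB : ∀ n, B (n+1) = B n + 2 * C n * a n := fun n => rfl
  have hCs : ∀ n, C (n+1) = A n + B n * a n + C n * (a n)^2 := fun n => rfl
  have hxsa : ∀ n, x (n + 1) = 1 / x n - a n := fun n => by rw [hxs n, ha n]
  have hroot : ∀ n, (A n : ℝ) * x n ^ 2 + B n * x n + C n = 0 := by
    intro n
    induction n with
    | zero => rw [hx0]; exact heq
    | succ n ih =>
      rw [hAC n, hB n, hCs n, hxsa n]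
      push_cast
      field_simp [hxne n]
      linear_combination ih
  have hA : ∀ n, A n ≠ 0 := by
    intro n
    induction n with
    | zero => exact ha0
    | succ n ih =>
      rw [hAC n]
      intro hC0
      have h := hroot n
      have hc0 : ((C n : ℤ) : ℝ) = 0 := by rw [hC0]; simp
      have h3 : x n * ((A n:ℝ) * x n + B n) = 0 := by linear_combination h - hc0
      rcases mul_eq_zero.1 h3 with h4 | h4
      · exact hxne n h4
      · exact int_linear_ne (A n) (B n) (x n) (hxirr n) ih h4
  have hdisc : ∀ n, (B n)^2 - 4 * A n * C n = (B 0)^2 - 4 * A 0 * C 0 := by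
    intro n
    induction n with
    | zero => rfl
    | succ n ih =>
      rw [← ih, hAC n, hB n, hCs n]
      ring
  exact quad_aux x a A B C hx' hxirr ha hxs hroot hA hAC hB hdisc
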